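/- For all real numbers a and x, 2 cos x · sin²(a−x) · sin(2a−x) · (sin²a + sin²x) − sin²x · (sin²(a−x) + sin²a) · (sin 2a + sin 2x) = (sin(2x−a)/4) · ( −cos a · cos(4(x−a/2)) + 2(2 cos 2a + sin²2a) · cos(2(x−a/2)) − cos a · (cos 4a − 5 cos 2a + 7) ). That is, in the scalene region the rigid-rotator function g factors as g = (sin 2y)·h/4 with y = x − a/2. -/
import Mathlib


open Real

/-- Factorization of the rigid-rotator function: g = (sin 2y)·h/4 with y = x − a/2. -/
theorem stmt_9 (a x : ℝ) :
    2 * cos x * sin (a - x) ^ 2 * sin (2 * a - x) * (sin a ^ 2 + sin x ^ 2)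
      - sin x ^ 2 * (sin (a - x) ^ 2 + sin a ^ 2) * (sin (2 * a) + sin (2 * x))
    = sin (2 * x - a) / 4 *
      (-cos a * cos (4 * (x - a / 2))
        + 2 * (2 * cos (2 * a) + sin (2 * a) ^ 2) * cos (2 * (x - a / 2))
        - cos a * (cos (4 * a) - 5 * cos (2 * a) + 7)) := by
  have h1 : 4 * (x - a / 2) = 2 * (2 * x - a) := by ring
  have h2 : 2 * (x - a / 2) = 2 * x - a := by ring
  have h3 : (4 : ℝ) * a = 2 * (2 * a) := by ring
  rw [h1, h2, h3]
  simp only [sin_sub, cos_sub, sin_two_mul, cos_two_mul]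
  linear_combination ((2:ℝ)*(Real.sin x)*(Real.cos x) + (-2:ℝ)*(Real.sin x)*(Real.cos x)^3 + (-2:ℝ)*(Real.sin x)^3*(Real.cos x) + (-10:ℝ)*(Real.cos a)^2*(Real.sin x)*(Real.cos x) + (10:ℝ)*(Real.cos a)^2*(Real.sin x)*(Real.cos x)^3 + (-8:ℝ)*(Real.cos a)^2*(Real.sin x)*(Real.cos x)^5 + (6:ℝ)*(Real.cos a)^2*(Real.sin x)^3*(Real.cos x) + (-8:ℝ)*(Real.cos a)^2*(Real.sin x)^3*(Real.cos x)^3 + (8:ℝ)*(Real.cos a)^4*(Real.sin x)*(Real.cos x) + (-4:ℝ)*(Real.cos a)^4*(Real.sin x)*(Real.cos x)^3 + (-4:ℝ)*(Real.cos a)^4*(Real.sin x)^3*(Real.cos x) + (4:ℝ)*(Real.sin a)*(Real.cos a)*(Real.cos x)^4 + (-2:ℝ)*(Real.sin a)*(Real.cos a)*(Real.sin x)^2 + (-4:ℝ)*(Real.sin a)*(Real.cos a)*(Real.sin x)^2*(Real.cos x)^2 + (2:ℝ)*(Real.sin a)*(Real.cos a)^3 + (-8:ℝ)*(Real.sin a)*(Real.cos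 a)^3*(Real.cos x)^2 + (4:ℝ)*(Real.sin a)*(Real.cos a)^3*(Real.cos x)^4 + (4:ℝ)*(Real.sin a)*(Real.cos a)^3*(Real.sin x)^2*(Real.cos x)^2 + (2:ℝ)*(Real.sin a)^2*(Real.sin x)*(Real.cos x)^3 + (-4:ℝ)*(Real.sin a)^2*(Real.cos a)^2*(Real.sin x)*(Real.cos x) + (-4:ℝ)*(Real.sin a)^2*(Real.cos a)^2*(Real.sin x)*(Real.cos x)^3 + (4:ℝ)*(Real.sin a)^3*(Real.cos a)*(Real.cos x)^4) * sin_sq_add_cos_sq a + ((-2:ℝ)*(Real.sin x)*(Real.cos x) + (8:ℝ)*(Real.cos a)^2*(Real.sin x)*(Real.cos x) + (-8:ℝ)*(Real.cos a)^2*(Real.sin x)*(Real.cos x)^3 + (-14:ℝ)*(Real.cos a)^4*(Real.sin x)*(Real.cos x) + (12:ℝ)*(Real.cos a)^4*(Real.sin x)*(Real.cos x)^3 + (-4:ℝ)*(Real.cos a)^4*(Real.sin x)^3*(Real.cos x) + (4:ℝ)*(Real.cos a)^6*(Real.sin x)*(Real.cos x) + (-2:ℝ)*(Real.sin a)*(Real.cos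 a) + (10:ℝ)*(Real.sin a)*(Real.cos a)^3*(Real.cos x)^2 + (-4:ℝ)*(Real.sin a)*(Real.cos a)^3*(Real.cos x)^4 + (-2:ℝ)*(Real.sin a)*(Real.cos a)^3*(Real.sin x)^2 + (12:ℝ)*(Real.sin a)*(Real.cos a)^3*(Real.sin x)^2*(Real.cos x)^2 + (-4:ℝ)*(Real.sin a)*(Real.cos a)^5*(Real.cos x)^2) * sin_sq_add_cos_sq x
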